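/- For every graph G of order n, the PSD propagation time satisfies pt_+(G) ≤ ⌈(n − Z_+(G))/2⌉ ≤ ⌈(n−1)/2⌉ ≤ n/2. -/

import Mathlib

open SimpleGraph Set

variable {V : Type*}

/-- The subgraph of `G` obtained by deleting the vertices of `B`
(kept as isolated vertices). -/
def delVerts (G : SimpleGraph V) (B : Set V) : SimpleGraph V where
  Adj a b := G.Adj a b ∧ a ∉ B ∧ b ∉ B
  symm := ⟨fun _ _ ⟨h, ha, hb⟩ => ⟨h.symm, hb, ha⟩⟩
  loopless := ⟨fun a ⟨h, _, _⟩ => G.loopless.irrefl a h⟩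

lemma delVerts_adj {G : SimpleGraph V} {B : Set V} {a b : V} :
    (delVerts G B).Adj a b ↔ G.Adj a b ∧ a ∉ B ∧ b ∉ B := Iff.rfl

/-- `u` may PSD-force `w` when the set of blue vertices is `B`:  `u` is blue, `w` is a white
neighbor of `u`, and `w` is the unique white neighbor of `u` in the component of `G - B`
containing `w`. -/
def PSDForce (G : SimpleGraph V) (B : Set V) (u w : V) : Prop :=
  u ∈ B ∧ w ∉ B ∧ G.Adj u w ∧
    ∀ x, G.Adj u x → x ∉ B → (delVerts G B).Reachable x w → x = w

/-- One round of simultaneous PSD forcing starting from blue set `B`. -/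
def psdStep (G : SimpleGraph V) (B : Set V) : Set V :=
  B ∪ {w | ∃ u, PSDForce G B u w}

/-- `B` is a PSD forcing set of `G`. -/
def IsPSDForcingSet (G : SimpleGraph V) (B : Set V) : Prop :=
  ∃ t, (psdStep G)^[t] B = Set.univ

/-- The PSD propagation time `pt_+(G; B)` of the set `B` in `G`. -/
noncomputable def psdPropTime (G : SimpleGraph V) (B : Set V) : ℕ :=
  sInf {t | (psdStep G)^[t] B = Set.univ}

/-- The PSD zero forcing number `Z_+(G)`. -/
noncomputable def psdZ (G : SimpleGraph V) : ℕ :=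
  sInf {k | ∃ B : Set V, IsPSDForcingSet G B ∧ B.ncard = k}

/-- The `k`-PSD propagation time `pt_+(G, k)`: the minimum of `pt_+(G; B)` over
PSD forcing sets `B` of size `k`. -/
noncomputable def psdPt (G : SimpleGraph V) (k : ℕ) : ℕ :=
  sInf {t | ∃ B : Set V, IsPSDForcingSet G B ∧ B.ncard = k ∧ psdPropTime G B = t}

/-- The PSD propagation time `pt_+(G) = pt_+(G, Z_+(G))`. -/
noncomputable def psdPtG (G : SimpleGraph V) : ℕ := psdPt G (psdZ G)

/-- The PSD propagation time of `B` within the induced subgraph `G[U]` (for `B ⊆ U`),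
realized by making the vertices outside `U` isolated and initially blue. -/
noncomputable def psdPropTimeOn (G : SimpleGraph V) (U B : Set V) : ℕ :=
  psdPropTime (delVerts G Uᶜ) (B ∪ Uᶜ)

/-- The vertex set of the component of `G - B` containing the white vertex `w`. -/
def compOf (G : SimpleGraph V) (B : Set V) (w : V) : Set V :=
  {x | x ∉ B ∧ (delVerts G B).Reachable x w}

/- ===== auxiliary lemmas ===== -/

lemma delVerts_anti {G : SimpleGraph V} {B B' : Set V} (h : B ⊆ B') :
    delVerts G B' ≤ delVerts G B := by
  intro a b hab
  have hab := delVerts_adj.1 hab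
  exact delVerts_adj.2 ⟨hab.1, fun hx => hab.2.1 (h hx), fun hx => hab.2.2 (h hx)⟩

lemma force_mono {G : SimpleGraph V} {B B' : Set V} (h : B ⊆ B') {u w : V}
    (hf : PSDForce G B u w) (hw : w ∉ B') : PSDForce G B' u w := by
  refine ⟨h hf.1, hw, hf.2.2.1, fun x hadj hx hreach => ?_⟩
  exact hf.2.2.2 x hadj (fun hxB => hx (h hxB)) (hreach.mono (delVerts_anti h))

lemma subset_psdStep (G : SimpleGraph V) (B : Set V) : B ⊆ psdStep G B :=
  Set.subset_union_left

lemma psdStep_mono {G : SimpleGraph V} {B B' : Set V} (h : B ⊆ B') :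
    psdStep G B ⊆ psdStep G B' := by
  intro w hw
  simp only [psdStep, Set.mem_union, Set.mem_setOf_eq] at hw ⊢
  rcases hw with hw | ⟨u, hu⟩
  · exact Or.inl (h hw)
  · by_cases hwB : w ∈ B'
    · exact Or.inl hwB
    · exact Or.inr ⟨u, force_mono h hu hwB⟩

lemma iter_mono_set {G : SimpleGraph V} (t : ℕ) :
    ∀ {B B' : Set V}, B ⊆ B' → (psdStep G)^[t] B ⊆ (psdStep G)^[t] B' := by
  induction t with
  | zero => exact fun h => h
  | succ t ih =>
    intro B B' h
    rw [Function.iterate_succ_apply, Function.iterate_succ_apply]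
    exact ih (psdStep_mono h)

lemma subset_iter {G : SimpleGraph V} : ∀ (t : ℕ) (B : Set V), B ⊆ (psdStep G)^[t] B
  | 0, _ => subset_rfl
  | (t+1), B => by
    rw [Function.iterate_succ_apply]
    exact (subset_psdStep G B).trans (subset_iter t _)

lemma iter_mono_time {G : SimpleGraph V} {s t : ℕ} (h : s ≤ t) (B : Set V) :
    (psdStep G)^[s] B ⊆ (psdStep G)^[t] B := by
  obtain ⟨k, rfl⟩ := Nat.exists_eq_add_of_le h
  rw [Nat.add_comm, Function.iterate_add_apply]
  exact subset_iter k _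

lemma forcing_mono {G : SimpleGraph V} {B B' : Set V} (h : B ⊆ B')
    (hB : IsPSDForcingSet G B) : IsPSDForcingSet G B' := by
  obtain ⟨t, ht⟩ := hB
  exact ⟨t, Set.eq_univ_of_univ_subset (ht ▸ iter_mono_set t h)⟩

lemma walk_closed {H : SimpleGraph V} {S : Set V}
    (hcl : ∀ a b, a ∈ S → H.Adj a b → b ∈ S) {a b : V} (p : H.Walk a b) :
    a ∈ S → b ∈ S := by
  induction p with
  | nil => exact id
  | cons h _ ih => exact fun ha => ih (hcl _ _ ha h)

lemma reach_lift {G : SimpleGraph V} {B D C : Set V}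
    (hcl : ∀ a b, a ∈ C → (delVerts G B).Adj a b → b ∈ C)
    (hCD : ∀ x, x ∈ C → x ∉ D) {y x : V} (p : (delVerts G B).Walk y x) :
    y ∈ C → (delVerts G D).Reachable y x := by
  induction p with
  | nil => exact fun _ => SimpleGraph.Reachable.refl _
  | cons h p ih =>
    intro hy
    have hb := hcl _ _ hy h
    have hadj : (delVerts G D).Adj _ _ := delVerts_adj.2 ⟨(delVerts_adj.1 h).1, hCD _ hy, hCD _ hb⟩
    exact hadj.reachable.trans (ih hb)

lemma compOf_closed (G : SimpleGraph V) (B : Set V) (v : V) :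
    ∀ a b, a ∈ compOf G B v → (delVerts G B).Adj a b → b ∈ compOf G B v :=
  fun _ b ha hab => ⟨(delVerts_adj.1 hab).2.2, hab.symm.reachable.trans ha.2⟩

/-- If `B` is a PSD forcing set, every white component receives a force already
in the very first round; more precisely there is a blue vertex having a unique
neighbor in the component. -/
lemma exists_force {G : SimpleGraph V} {B : Set V} (hB : IsPSDForcingSet G B)
    {v : V} (hv : v ∉ B) :
    ∃ u ∈ B, ∃ w ∈ compOf G B v, G.Adj u w ∧ ∀ y ∈ compOf G B v, G.Adj u y → y = w := by
  by_contra hcon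
  push_neg at hcon
  have key : ∀ t, ∀ x ∈ compOf G B v, x ∉ (psdStep G)^[t] B := by
    intro t
    induction t with
    | zero => exact fun x hx hxB => hx.1 hxB
    | succ t ih =>
      intro x hx hxin
      rw [Function.iterate_succ_apply'] at hxin
      simp only [psdStep, Set.mem_union, Set.mem_setOf_eq] at hxin
      rcases hxin with hxin | ⟨u, hu⟩
      · exact ih x hx hxin
      · have huB : u ∈ B := by
          by_contra huB
          exact ih u ⟨huB, (SimpleGraph.Adj.reachable
            (delVerts_adj.2 ⟨hu.2.2.1, huB, hx.1⟩ : (delVerts G B).Adj u x)).trans hx.2⟩ hu.1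
        obtain ⟨y, hy, hadj, hne⟩ := hcon u huB x hx hu.2.2.1
        have hre : (delVerts G ((psdStep G)^[t] B)).Reachable y x := by
          obtain ⟨p⟩ := (hy.2.trans hx.2.symm : (delVerts G B).Reachable y x)
          exact reach_lift (compOf_closed G B v) (fun z hz => ih z hz) p hy
        exact hne (hu.2.2.2 y hadj (ih y hy) hre)
  obtain ⟨T, hT⟩ := hB
  exact key T v ⟨hv, SimpleGraph.Reachable.refl v⟩ (by rw [hT]; exact Set.mem_univ v)

/-- Every white vertex is forced within (size of its component) many rounds. -/
lemma comp_time {G : SimpleGraph V} [Fintype V] :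
    ∀ (m : ℕ) (B : Set V), IsPSDForcingSet G B → ∀ v, v ∉ B →
      (compOf G B v).ncard ≤ m → v ∈ (psdStep G)^[m] B := by
  intro m
  induction m with
  | zero =>
    intro B _ v hv hc
    have h1 : 0 < (compOf G B v).ncard :=
      (Set.ncard_pos (Set.toFinite _)).2 ⟨v, hv, SimpleGraph.Reachable.refl v⟩
    omega
  | succ m ih =>
    intro B hB v hv hc
    obtain ⟨u, huB, w, hw, hadj, huniq⟩ := exists_force hB hv
    have hforce : PSDForce G B u w :=
      ⟨huB, hw.1, hadj, fun x hx hxB hre => huniq x ⟨hxB, hre.trans hw.2⟩ hx⟩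
    have hwstep : w ∈ psdStep G B := Set.mem_union_right _ ⟨u, hforce⟩
    rw [Function.iterate_succ_apply]
    by_cases hvw : v = w
    · exact subset_iter m _ (hvw ▸ hwstep)
    · have hB'' : IsPSDForcingSet G (insert w B) :=
        forcing_mono (Set.subset_insert _ _) hB
      have hv'' : v ∉ insert w B := by
        intro h
        rcases h with h | h
        · exact hvw h
        · exact hv h
      have hsub : compOf G (insert w B) v ⊆ compOf G B v \ {w} := by
        intro x hx
        refine ⟨⟨fun hxB => hx.1 (Set.mem_insert_of_mem _ hxB),
          hx.2.mono (delVerts_anti (Set.subset_insert _ _))⟩, ?_⟩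
        simp only [Set.mem_singleton_iff]
        exact fun h => hx.1 (h ▸ Set.mem_insert _ _)
      have hcard : (compOf G (insert w B) v).ncard ≤ m := by
        have h1 : (compOf G (insert w B) v).ncard ≤ (compOf G B v \ {w}).ncard :=
          Set.ncard_le_ncard hsub (Set.toFinite _)
        have h2 : (compOf G B v \ {w}).ncard = (compOf G B v).ncard - 1 :=
          Set.ncard_diff_singleton_of_mem hw
        have h3 : 0 < (compOf G B v).ncard :=
          (Set.ncard_pos (Set.toFinite _)).2 ⟨w, hw⟩
        omega
      have hmem := ih (insert w B) hB'' v hv'' hcard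
      have hins : insert w B ⊆ psdStep G B :=
        Set.insert_subset hwstep (subset_psdStep G B)
      exact iter_mono_set m hins hmem

/-- Rebalancing: from any minimum PSD forcing set we can reach one all of whose
white components have size at most `⌈(n-z)/2⌉`. -/
lemma balance {G : SimpleGraph V} [Fintype V] :
    ∀ (M : ℕ) (B : Set V), IsPSDForcingSet G B →
      (∀ v, v ∉ B → (compOf G B v).ncard ≤ M) →
      ∃ B' : Set V, IsPSDForcingSet G B' ∧ B'.ncard = B.ncard ∧
        ∀ v, v ∉ B' → (compOf G B' v).ncard ≤ (Fintype.card V - B.ncard + 1) / 2 := by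
  intro M
  induction M with
  | zero =>
    intro B hB hM
    exact ⟨B, hB, rfl, fun v hv => le_trans (hM v hv) (Nat.zero_le _)⟩
  | succ M ih =>
    intro B hB hM
    by_cases hgood : ∀ v, v ∉ B → (compOf G B v).ncard ≤ (Fintype.card V - B.ncard + 1) / 2
    · exact ⟨B, hB, rfl, hgood⟩
    push_neg at hgood
    obtain ⟨v₀, hv₀, hbig⟩ := hgood
    obtain ⟨u, huB, w, hwC, hadj, huniq⟩ := exists_force hB hv₀
    set C := compOf G B v₀ with hCdef
    have hCcl := compOf_closed G B v₀
    have hwB : w ∉ B := hwC.1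
    have hune : u ≠ w := fun h => hwB (h ▸ huB)
    set B' := insert w (B \ {u}) with hB'def
    have hwB' : w ∈ B' := Set.mem_insert _ _
    have huB' : u ∉ B' := by
      intro h
      rcases h with h | h
      · exact hune h
      · exact h.2 rfl
    -- C \ {w} is closed under adjacency in G - B'
    have hCw : ∀ a b, a ∈ C \ {w} → (delVerts G B').Adj a b → b ∈ C \ {w} := by
      rintro a b ⟨haC, haw⟩ hab
      simp only [Set.mem_singleton_iff] at haw
      have hbB' : b ∉ B' := (delVerts_adj.1 hab).2.2
      have hbw : b ≠ w := fun h => hbB' (h ▸ hwB')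
      have hbu : b ≠ u := by
        rintro rfl
        exact haw (huniq a haC (delVerts_adj.1 hab).1.symm)
      have hbB : b ∉ B := fun h => hbB' (Set.mem_insert_of_mem _ ⟨h, hbu⟩)
      have haB : a ∉ B := haC.1
      exact ⟨hCcl a b haC (delVerts_adj.2 ⟨(delVerts_adj.1 hab).1, haB, hbB⟩), hbw⟩
    -- w forces u from B'
    have hforce : PSDForce G B' w u := by
      refine ⟨hwB', huB', hadj.symm, fun y hyadj hyB' hre => ?_⟩
      by_contra hne
      have hyw : y ≠ w := fun h => hyB' (h ▸ hwB')
      have hyB : y ∉ B := fun h =>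
        hyB' (Set.mem_insert_of_mem _ ⟨h, fun hyu => hne hyu⟩)
      have hyC : y ∈ C := hCcl w y hwC (delVerts_adj.2 ⟨hyadj, hwB, hyB⟩)
      obtain ⟨p⟩ := hre
      have huCw : u ∈ C \ {w} := walk_closed hCw p ⟨hyC, hyw⟩
      exact huCw.1.1 huB
    -- B' is a forcing set of the same cardinality
    have hBsub : B ⊆ psdStep G B' := by
      intro b hb
      by_cases hbu : b = u
      · exact Set.mem_union_right _ ⟨w, hbu ▸ hforce⟩
      · exact subset_psdStep G B' (Set.mem_insert_of_mem _ ⟨hb, hbu⟩)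
    have hB'forcing : IsPSDForcingSet G B' := by
      obtain ⟨t, ht⟩ := hB
      refine ⟨t + 1, Set.eq_univ_of_univ_subset ?_⟩
      have h1 : (psdStep G)^[t] B ⊆ (psdStep G)^[t] (psdStep G B') := iter_mono_set t hBsub
      rw [← Function.iterate_succ_apply] at h1
      exact ht ▸ h1
    have hwBu : w ∉ B \ {u} := fun h => hwB h.1
    have hcard' : B'.ncard = B.ncard := by
      have h1 : (B \ {u}).ncard = B.ncard - 1 :=
        Set.ncard_diff_singleton_of_mem huB
      have h2 : B'.ncard = (B \ {u}).ncard + 1 :=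
        Set.ncard_insert_of_notMem hwBu (Set.toFinite _)
      have hpos : 0 < B.ncard := (Set.ncard_pos (Set.toFinite _)).2 ⟨u, huB⟩
      omega
    -- all components of G - B' are strictly smaller than M + 1
    have hCsub : C ⊆ Bᶜ := fun x hx => hx.1
    have hCn : C.ncard ≤ M + 1 := hM v₀ hv₀
    have hBc : B.ncard + Bᶜ.ncard = Fintype.card V := by
      rw [← Nat.card_eq_fintype_card]
      exact Set.ncard_add_ncard_compl B (Set.toFinite _) (Set.toFinite _)
    have hdiff : (Bᶜ \ C).ncard = Bᶜ.ncard - C.ncard :=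
      Set.ncard_diff hCsub (Set.toFinite _)
    have hCle : C.ncard ≤ Bᶜ.ncard := Set.ncard_le_ncard hCsub (Set.toFinite _)
    have hcompbound : ∀ v, v ∉ B' → (compOf G B' v).ncard ≤ M := by
      intro v hvB'
      by_cases hvC : v ∈ C \ {w}
      · have hsub : compOf G B' v ⊆ C \ {w} := by
          intro x hx
          obtain ⟨p⟩ := hx.2.symm
          exact walk_closed hCw p hvC
        have h1 : (compOf G B' v).ncard ≤ (C \ {w}).ncard :=
          Set.ncard_le_ncard hsub (Set.toFinite _)
        have h2 : (C \ {w}).ncard = C.ncard - 1 :=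
          Set.ncard_diff_singleton_of_mem hwC
        omega
      · have hsub : compOf G B' v ⊆ insert u (Bᶜ \ C) := by
          intro x hx
          have hxC : x ∉ C \ {w} := by
            intro hxCw
            obtain ⟨p⟩ := hx.2
            exact hvC (walk_closed hCw p hxCw)
          by_cases hxu : x = u
          · exact hxu ▸ Set.mem_insert _ _
          · have hxB : x ∉ B := fun h => hx.1 (Set.mem_insert_of_mem _ ⟨h, hxu⟩)
            have hxw : x ≠ w := fun h => hx.1 (h ▸ hwB')
            have hxnC : x ∉ C := fun h => hxC ⟨h, hxw⟩
            exact Set.mem_insert_of_mem _ ⟨hxB, hxnC⟩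
        have h1 : (compOf G B' v).ncard ≤ (insert u (Bᶜ \ C)).ncard :=
          Set.ncard_le_ncard hsub (Set.toFinite _)
        have h2 : (insert u (Bᶜ \ C)).ncard ≤ (Bᶜ \ C).ncard + 1 :=
          Set.ncard_insert_le _ _
        omega
    obtain ⟨B'', h1, h2, h3⟩ := ih B' hB'forcing hcompbound
    rw [hcard'] at h2 h3
    exact ⟨B'', h1, h2, h3⟩

lemma psdZ_pos (G : SimpleGraph V) [Fintype V] [Nonempty V] : 1 ≤ psdZ G := by
  by_contra h
  push_neg at h
  have hz : psdZ G = 0 := by omega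
  have hne : {k | ∃ B : Set V, IsPSDForcingSet G B ∧ B.ncard = k}.Nonempty :=
    ⟨(Set.univ : Set V).ncard, Set.univ, ⟨0, rfl⟩, rfl⟩
  obtain ⟨B₀, hB₀, hB₀card⟩ : ∃ B : Set V, IsPSDForcingSet G B ∧ B.ncard = psdZ G :=
    Nat.sInf_mem hne
  have hB₀empty : B₀ = ∅ := (Set.ncard_eq_zero (Set.toFinite _)).1 (hB₀card.trans hz)
  subst hB₀empty
  have hstep : psdStep G (∅ : Set V) = ∅ := by
    ext x
    simp [psdStep, PSDForce]
  have hiter : ∀ s, (psdStep G)^[s] (∅ : Set V) = ∅ := by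
    intro s
    induction s with
    | zero => rfl
    | succ s ihs => rw [Function.iterate_succ_apply, hstep]; exact ihs
  obtain ⟨t, ht⟩ := hB₀
  rw [hiter t] at ht
  exact (Set.univ_eq_empty_iff.1 ht.symm).false (Classical.arbitrary V)

/-- `pt_+(G) ≤ ⌈(n - Z_+(G))/2⌉ ≤ ⌈(n-1)/2⌉ ≤ n/2`. -/
theorem stmt6 [Fintype V] [Nonempty V] (G : SimpleGraph V) :
    psdPtG G ≤ (Fintype.card V - psdZ G + 1) / 2 ∧
    (Fintype.card V - psdZ G + 1) / 2 ≤ (Fintype.card V - 1 + 1) / 2 ∧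
    (((Fintype.card V - 1 + 1) / 2 : ℕ) : ℝ) ≤ (Fintype.card V : ℝ) / 2 := by
  have hne : {k | ∃ B : Set V, IsPSDForcingSet G B ∧ B.ncard = k}.Nonempty :=
    ⟨(Set.univ : Set V).ncard, Set.univ, ⟨0, rfl⟩, rfl⟩
  obtain ⟨B₀, hB₀, hB₀card⟩ : ∃ B : Set V, IsPSDForcingSet G B ∧ B.ncard = psdZ G :=
    Nat.sInf_mem hne
  have hcomp0 : ∀ v, v ∉ B₀ → (compOf G B₀ v).ncard ≤ Fintype.card V := by
    intro v _
    calc (compOf G B₀ v).ncard ≤ (Set.univ : Set V).ncard :=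
          Set.ncard_le_ncard (Set.subset_univ _) (Set.toFinite _)
      _ = Fintype.card V := by rw [Set.ncard_univ, Nat.card_eq_fintype_card]
  obtain ⟨B', hB'f, hB'card, hB'comp⟩ := balance (Fintype.card V) B₀ hB₀ hcomp0
  rw [hB₀card] at hB'card hB'comp
  have hiter : (psdStep G)^[(Fintype.card V - psdZ G + 1) / 2] B' = Set.univ := by
    apply Set.eq_univ_of_forall
    intro v
    by_cases hv : v ∈ B'
    · exact subset_iter _ _ hv
    · exact comp_time _ B' hB'f v hv (hB'comp v hv)
  have hpt : psdPropTime G B' ≤ (Fintype.card V - psdZ G + 1) / 2 := Nat.sInf_le hiter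
  have h1 : psdPtG G ≤ (Fintype.card V - psdZ G + 1) / 2 := by
    refine le_trans (Nat.sInf_le ?_) hpt
    exact ⟨B', hB'f, hB'card, rfl⟩
  refine ⟨h1, ?_, ?_⟩
  · have := psdZ_pos G
    omega
  · have hn : Fintype.card V - 1 + 1 = Fintype.card V :=
      Nat.succ_pred_eq_of_pos Fintype.card_pos
    rw [hn]
    exact Nat.cast_div_le
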